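/- The Herzog ideal 𝔭_n is a prime ideal of height 2 in k[x1,x2,x3], and the quotient A/𝔭_n is a one-dimensional domain. -/

import Mathlib

/-- The Herzog ideal associated to `n ∈ ℕ^3`: the kernel of the `k`-algebra map
`k[x1,x2,x3] → k[t]` sending `xᵢ` to `t^{nᵢ}`. -/
noncomputable def herzogIdeal (k : Type*) [Field k] (n : Fin 3 → ℕ) :
    Ideal (MvPolynomial (Fin 3) k) :=
  RingHom.ker (MvPolynomial.aeval (fun i => (Polynomial.X : Polynomial k) ^ n i)).toRingHom

/-- The height of an ideal: the infimum of the heights (in the prime spectrum)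
of the primes containing it. -/
noncomputable def idealHeight {A : Type*} [CommRing A] (J : Ideal A) : ℕ∞ :=
  ⨅ p : {p : PrimeSpectrum A // J ≤ p.asIdeal}, Order.height p.1



open Polynomial

/-- One-variable step: if `g(u) ∈ P` with `u ∈ P' \ P`, `P ≤ P'` primes, and all
coefficients of `g` below `m` vanish, then `g.coeff m ∈ P'`. -/
lemma aux_ov {A : Type*} [CommRing A] (P P' : Ideal A) [hP : P.IsPrime] (hle : P ≤ P')
    {u : A} (hu' : u ∈ P') (hu : u ∉ P) :
    ∀ (m : ℕ) (g : Polynomial A), (∀ j, j < m → g.coeff j = 0) → g.eval u ∈ P →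
      g.coeff m ∈ P' := by
  intro m
  induction m with
  | zero =>
    intro g _ hg
    have h2 := congrArg (Polynomial.eval u) (Polynomial.X_mul_divX_add g)
    simp only [Polynomial.eval_add, Polynomial.eval_mul, Polynomial.eval_X,
      Polynomial.eval_C] at h2
    have h1 : g.coeff 0 = g.eval u - u * (g.divX.eval u) := by rw [← h2]; ring
    rw [h1]
    exact Ideal.sub_mem _ (hle hg) (Ideal.mul_mem_right _ _ hu')
  | succ m ih =>
    intro g h0 hg
    have hc0 : g.coeff 0 = 0 := h0 0 (Nat.succ_pos m)
    have hX : Polynomial.X * g.divX = g := by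
      have := Polynomial.X_mul_divX_add g
      rwa [hc0, map_zero, add_zero] at this
    have hmul : u * (g.divX.eval u) ∈ P := by
      have h3 := congrArg (Polynomial.eval u) hX
      simp only [Polynomial.eval_mul, Polynomial.eval_X] at h3
      rwa [h3]
    have hdiv : g.divX.eval u ∈ P := ((hP.mem_or_mem hmul).resolve_left hu)
    have := ih g.divX (fun j hj => by
      rw [Polynomial.coeff_divX]; exact h0 (j + 1) (Nat.succ_lt_succ hj)) hdiv
    rwa [Polynomial.coeff_divX] at this

/-- Multivariate collapsing lemma (Coquand–Lombardi style): given a chain of ideals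
`p 0 ≤ p 1 ≤ ... ≤ p n` (the first `n` prime) and `x i ∈ p (i+1) \ p i`, any nonzero
polynomial with `Q(x) ∈ p 0` has some coefficient in `p n`. -/
lemma aux_ml {A : Type*} [CommRing A] :
    ∀ (n : ℕ) (p : Fin (n + 1) → Ideal A), (∀ i : Fin n, (p i.castSucc).IsPrime) →
      (∀ i : Fin n, p i.castSucc ≤ p i.succ) →
      ∀ (x : Fin n → A), (∀ i, x i ∈ p i.succ) → (∀ i, x i ∉ p i.castSucc) →
      ∀ (Q : MvPolynomial (Fin n) A), Q ≠ 0 → MvPolynomial.eval x Q ∈ p 0 →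
      ∃ α ∈ Q.support, MvPolynomial.coeff α Q ∈ p (Fin.last n) := by
  intro n
  induction n with
  | zero =>
    intro p _ _ x _ _ Q hQ hev
    have hc : Q = MvPolynomial.C (MvPolynomial.coeff 0 Q) := MvPolynomial.eq_C_of_isEmpty Q
    have hlast : (Fin.last 0) = (0 : Fin 1) := rfl
    refine ⟨0, ?_, ?_⟩
    · rw [MvPolynomial.mem_support_iff]
      intro h
      apply hQ
      rw [hc, h, map_zero]
    · have he : MvPolynomial.eval x Q = MvPolynomial.coeff 0 Q := by
        conv_lhs => rw [hc]
        simp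
      rw [hlast, ← he]
      exact hev
  | succ n ih =>
    intro p hp hle x hx hx' Q hQ hev
    set f := MvPolynomial.finSuccEquiv A n Q with hfdef
    have hfne : f ≠ 0 := by
      intro h
      apply hQ
      have := congrArg (MvPolynomial.finSuccEquiv A n).symm h
      simpa [hfdef] using this
    set m := f.natTrailingDegree with hm
    set g : Polynomial A := f.map (MvPolynomial.eval (Fin.tail x)) with hg
    have hgev : Polynomial.eval (x 0) g ∈ p 0 := by
      have h1 : MvPolynomial.eval x Q = Polynomial.eval (x 0) g := by
        conv_lhs => rw [← Fin.cons_self_tail x]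
        rw [MvPolynomial.eval_eq_eval_mv_eval']
      rwa [h1] at hev
    have hp0 : (p 0).IsPrime := by
      have := hp 0; rwa [Fin.castSucc_zero] at this
    have hle0 : p 0 ≤ p (Fin.succ 0) := by
      have := hle 0; rwa [Fin.castSucc_zero] at this
    have hx0 : x 0 ∈ p (Fin.succ 0) := hx 0
    have hx0' : x 0 ∉ p 0 := by
      have := hx' 0; rwa [Fin.castSucc_zero] at this
    have hcoeff : g.coeff m ∈ p (Fin.succ 0) := by
      refine aux_ov (p 0) (p (Fin.succ 0)) hle0 hx0 hx0' m g (fun j hj => ?_) hgev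
      rw [hg, Polynomial.coeff_map, Polynomial.coeff_eq_zero_of_lt_natTrailingDegree hj, map_zero]
    set c := f.coeff m with hcdef
    have hcne : c ≠ 0 := by
      show f.trailingCoeff ≠ 0
      exact Polynomial.trailingCoeff_nonzero_iff_nonzero.mpr hfne
    have hcev : MvPolynomial.eval (Fin.tail x) c ∈ (p ∘ Fin.succ) 0 := by
      have : g.coeff m = MvPolynomial.eval (Fin.tail x) c := by
        rw [hg, Polynomial.coeff_map]
      rw [← this]
      exact hcoeff
    obtain ⟨β, hβs, hβm⟩ := ih (p ∘ Fin.succ)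
      (fun i => by
        show (p i.castSucc.succ).IsPrime
        rw [Fin.succ_castSucc]; exact hp i.succ)
      (fun i => by
        show p i.castSucc.succ ≤ p i.succ.succ
        rw [Fin.succ_castSucc]; exact hle i.succ)
      (Fin.tail x)
      (fun i => hx i.succ)
      (fun i => by
        show x i.succ ∉ p i.castSucc.succ
        rw [Fin.succ_castSucc]; exact hx' i.succ)
      c hcne hcev
    refine ⟨Finsupp.cons m β, ?_, ?_⟩
    · rw [MvPolynomial.mem_support_iff]
      rw [← MvPolynomial.finSuccEquiv_coeff_coeff β Q m]
      exact MvPolynomial.mem_support_iff.mp hβs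
    · rw [← MvPolynomial.finSuccEquiv_coeff_coeff β Q m]
      have : (p ∘ Fin.succ) (Fin.last n) = p (Fin.last (n + 1)) := by
        show p (Fin.last n).succ = _
        rw [Fin.succ_last]
      rwa [this] at hβm


open MvPolynomial

/-- Total degree bound for substitution. -/
lemma aux_deg {K : Type*} [CommSemiring K] {σ τ : Type*} {x : σ → MvPolynomial τ K} {D : ℕ}
    (hD : ∀ i, (x i).totalDegree ≤ D) (Q : MvPolynomial σ K) {d : ℕ} (hQ : Q.totalDegree ≤ d) :
    (MvPolynomial.aeval x Q).totalDegree ≤ d * D := by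
  conv_lhs => rw [Q.as_sum]
  rw [map_sum]
  refine le_trans (MvPolynomial.totalDegree_finset_sum _ _) ?_
  refine Finset.sup_le fun s hs => ?_
  rw [MvPolynomial.aeval_monomial]
  refine le_trans (MvPolynomial.totalDegree_mul _ _) ?_
  have h0 : (algebraMap K (MvPolynomial τ K) (Q.coeff s)).totalDegree = 0 := by
    rw [MvPolynomial.algebraMap_eq]; exact MvPolynomial.totalDegree_C _
  rw [h0, zero_add]
  refine le_trans (?_ : _ ≤ s.sum fun _ k => k * D) ?_
  · rw [Finsupp.prod, Finsupp.sum]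
    refine le_trans (MvPolynomial.totalDegree_finset_prod _ _) ?_
    refine Finset.sum_le_sum fun i _ => ?_
    exact le_trans (MvPolynomial.totalDegree_pow _ _) (Nat.mul_le_mul_left _ (hD i))
  · rw [Finsupp.sum, ← Finset.sum_mul]
    refine Nat.mul_le_mul_right _ ?_
    exact le_trans (MvPolynomial.le_totalDegree hs) hQ

/-- Upper bound for the dimension of polynomials of bounded total degree. -/
lemma aux_rank_up (K : Type*) [Field K] (r N : ℕ) :
    Module.finrank K (restrictTotalDegree (Fin r) K N) ≤ (N + 1) ^ r := by
  classical
  let L : restrictTotalDegree (Fin r) K N →ₗ[K] ((Fin r → Fin (N + 1)) → K) :=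
    { toFun := fun p a => MvPolynomial.coeff (Finsupp.equivFunOnFinite.symm fun i => ((a i : ℕ))) p.1
      map_add' := by intros p q; funext a; simp [MvPolynomial.coeff_add]
      map_smul' := by intros c p; funext a; simp [MvPolynomial.coeff_smul] }
  have hinj : Function.Injective L := by
    rw [injective_iff_map_eq_zero]
    intro p hp
    apply Subtype.ext
    apply MvPolynomial.ext
    intro s
    simp only [ZeroMemClass.coe_zero, MvPolynomial.coeff_zero]
    by_cases hs : ∀ i, s i ≤ N
    · have := congrFun hp (fun i => (⟨s i, Nat.lt_succ_of_le (hs i)⟩ : Fin (N + 1)))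
      simpa [L, Finsupp.equivFunOnFinite_symm_coe] using this
    · push_neg at hs
      obtain ⟨i, hi⟩ := hs
      by_contra hne
      have hmem := restrictTotalDegree_le_restrictDegree (Fin r) K N p.2
      rw [MvPolynomial.mem_restrictDegree] at hmem
      exact Nat.not_le.mpr hi (hmem s (MvPolynomial.mem_support_iff.mpr hne) i)
  calc Module.finrank K (restrictTotalDegree (Fin r) K N)
      ≤ Module.finrank K ((Fin r → Fin (N + 1)) → K) :=
        LinearMap.finrank_le_finrank_of_injective hinj
    _ = Fintype.card (Fin r → Fin (N + 1)) := Module.finrank_pi K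
    _ = (N + 1) ^ r := by simp [Fintype.card_fun]

/-- Lower bound for the dimension of polynomials of bounded total degree. -/
lemma aux_rank_low (K : Type*) [Field K] (r M : ℕ) :
    (M + 1) ^ r ≤ Module.finrank K (restrictTotalDegree (Fin r) K (r * M)) := by
  classical
  have hmem : ∀ a : Fin r → Fin (M + 1),
      (MvPolynomial.monomial (Finsupp.equivFunOnFinite.symm fun i => ((a i : ℕ))) (1 : K)) ∈
        restrictTotalDegree (Fin r) K (r * M) := by
    intro a
    rw [MvPolynomial.mem_restrictTotalDegree, MvPolynomial.totalDegree_monomial _ one_ne_zero]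
    calc ((Finsupp.equivFunOnFinite.symm fun i => ((a i : ℕ))).sum fun _ e => e)
        ≤ ∑ i : Fin r, ((a i : ℕ)) := by
          rw [Finsupp.sum]
          refine Finset.sum_le_sum_of_subset_of_nonneg (Finset.subset_univ _) ?_
          intros; exact Nat.zero_le _
      _ ≤ ∑ _i : Fin r, M := Finset.sum_le_sum fun i _ => Nat.lt_succ_iff.mp (a i).2
      _ = r * M := by simp [Finset.sum_const, smul_eq_mul]
  let v : (Fin r → Fin (M + 1)) → restrictTotalDegree (Fin r) K (r * M) := fun a =>
    ⟨_, hmem a⟩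
  have hinj2 : Function.Injective
      (fun a : Fin r → Fin (M + 1) => Finsupp.equivFunOnFinite.symm fun i => ((a i : ℕ))) := by
    intro a b hab
    have := congrArg (fun f => (Finsupp.equivFunOnFinite f : Fin r → ℕ)) hab
    simp only [Equiv.apply_symm_apply] at this
    funext i
    exact Fin.val_injective (congrFun this i)
  have hli0 : LinearIndependent K (fun a : Fin r → Fin (M + 1) =>
      (MvPolynomial.monomial (Finsupp.equivFunOnFinite.symm fun i => ((a i : ℕ))) (1 : K))) := by
    have hb := (MvPolynomial.basisMonomials (Fin r) K).linearIndependent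
    have := hb.comp _ hinj2
    simpa [MvPolynomial.coe_basisMonomials, Function.comp_def] using this
  have hli : LinearIndependent K v := by
    apply LinearIndependent.of_comp (Submodule.subtype _)
    exact hli0
  have := hli.fintype_card_le_finrank
  simpa [Fintype.card_fun] using this

/-- Any four polynomials in three variables are algebraically dependent. -/
lemma aux_dep {K : Type*} [Field K] (x : Fin 4 → MvPolynomial (Fin 3) K) :
    ∃ Q : MvPolynomial (Fin 4) K, Q ≠ 0 ∧ MvPolynomial.aeval x Q = 0 := by
  by_contra hcon
  push_neg at hcon
  have hinj : Function.Injective (MvPolynomial.aeval (R := K) x) := by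
    have h0 : ∀ Q, MvPolynomial.aeval x Q = 0 → Q = 0 := fun Q h =>
      by_contra fun hne => (hcon Q hne) h
    exact (injective_iff_map_eq_zero _).mpr h0
  set D := (Finset.univ.sup fun i => (x i).totalDegree) + 1 with hD
  have hDi : ∀ i, (x i).totalDegree ≤ D := fun i =>
    le_trans (Finset.le_sup (f := fun i => (x i).totalDegree) (Finset.mem_univ i)) (Nat.le_succ _)
  have hD1 : 1 ≤ D := Nat.succ_le_succ (Nat.zero_le _)
  set M := 125 * D ^ 3 + 1 with hM
  set d := 4 * M with hd
  set N := d * D with hN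
  let L0 := (MvPolynomial.aeval (R := K) x).toLinearMap.comp
    (Submodule.subtype (restrictTotalDegree (Fin 4) K d))
  have hmem : ∀ p : restrictTotalDegree (Fin 4) K d,
      L0 p ∈ restrictTotalDegree (Fin 3) K N := by
    intro p
    rw [MvPolynomial.mem_restrictTotalDegree]
    exact aux_deg hDi p.1 ((MvPolynomial.mem_restrictTotalDegree _ _ _).mp p.2)
  let L := LinearMap.codRestrict _ L0 hmem
  have hLinj : Function.Injective L := by
    intro a b hab
    apply Subtype.ext
    apply hinj
    have := congrArg Subtype.val hab
    simpa [L, L0] using this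
  have h1 : (M + 1) ^ 4 ≤ Module.finrank K (restrictTotalDegree (Fin 4) K d) :=
    aux_rank_low K 4 M
  have h2 := LinearMap.finrank_le_finrank_of_injective hLinj
  have h3 := aux_rank_up K 3 N
  -- arithmetic contradiction
  have hM1 : 1 ≤ M := by rw [hM]; omega
  have hMD : 1 ≤ M * D := Nat.mul_le_mul hM1 hD1
  have e0 : N = 4 * (M * D) := by rw [hN, hd]; ring
  have e1 : N + 1 ≤ 5 * (M * D) := by omega
  have e2 : (N + 1) ^ 3 ≤ (5 * (M * D)) ^ 3 := Nat.pow_le_pow_left e1 3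
  have e3 : (5 * (M * D)) ^ 3 = (125 * D ^ 3) * M ^ 3 := by ring
  have e4 : 125 * D ^ 3 < M := by rw [hM]; omega
  have e5 : (125 * D ^ 3) * M ^ 3 < M * M ^ 3 :=
    Nat.mul_lt_mul_of_lt_of_le e4 (le_refl (M ^ 3)) (by positivity)
  have e6 : M * M ^ 3 = M ^ 4 := by ring
  have e7 : M ^ 4 ≤ (M + 1) ^ 4 := Nat.pow_le_pow_left (Nat.le_succ _) 4
  have hcontr : (M + 1) ^ 4 ≤ (N + 1) ^ 3 := le_trans h1 (le_trans h2 h3)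
  have hlt : (N + 1) ^ 3 < (M + 1) ^ 4 := by
    calc (N + 1) ^ 3 ≤ (5 * (M * D)) ^ 3 := e2
      _ = (125 * D ^ 3) * M ^ 3 := e3
      _ < M * M ^ 3 := e5
      _ = M ^ 4 := e6
      _ ≤ (M + 1) ^ 4 := e7
  exact absurd (lt_of_le_of_lt hcontr hlt) (lt_irrefl _)

/-- A binomial `X i ^ a - X j ^ b` with `i ≠ j`, `a, b > 0` is nonzero. -/
lemma aux_binom_ne {K : Type*} [Field K] {σ : Type*} [DecidableEq σ] {i j : σ} (hij : i ≠ j)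
    {a b : ℕ} (ha : 0 < a) (hb : 0 < b) :
    (MvPolynomial.X i ^ a - MvPolynomial.X j ^ b : MvPolynomial σ K) ≠ 0 := by
  intro h
  have h2 := congrArg (MvPolynomial.coeff (Finsupp.single i a)) h
  have hsne : ¬ (Finsupp.single j b = Finsupp.single i a) := by
    rw [Finsupp.single_eq_single_iff]
    rintro (⟨hji, -⟩ | ⟨hb0, -⟩)
    · exact hij hji.symm
    · omega
  rw [MvPolynomial.coeff_zero, MvPolynomial.coeff_sub, MvPolynomial.X_pow_eq_monomial,
    MvPolynomial.X_pow_eq_monomial, MvPolynomial.coeff_monomial, MvPolynomial.coeff_monomial,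
    if_pos rfl, if_neg hsne] at h2
  simpa using h2

/-- There is no strictly increasing chain of 5 prime ideals in `k[x₁,x₂,x₃]`. -/
lemma aux_no5 {K : Type*} [Field K] (p : Fin 5 → Ideal (MvPolynomial (Fin 3) K))
    (hp : ∀ i, (p i).IsPrime) (hlt : ∀ i : Fin 4, p i.castSucc < p i.succ) : False := by
  have hxe : ∀ i : Fin 4, ∃ y, y ∈ p i.succ ∧ y ∉ p i.castSucc := fun i =>
    SetLike.exists_of_lt (hlt i)
  choose x hx1 hx2 using hxe
  obtain ⟨Q, hQne, hQev⟩ := aux_dep x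
  set Q' : MvPolynomial (Fin 4) (MvPolynomial (Fin 3) K) :=
    MvPolynomial.map (algebraMap K (MvPolynomial (Fin 3) K)) Q with hQ'
  have hmapinj : Function.Injective (algebraMap K (MvPolynomial (Fin 3) K)) := by
    rw [MvPolynomial.algebraMap_eq]
    exact MvPolynomial.C_injective _ _
  have hQ'ne : Q' ≠ 0 := by
    intro h
    exact hQne (MvPolynomial.map_injective _ hmapinj (by rw [← hQ', h, map_zero]))
  have hev : MvPolynomial.eval x Q' ∈ p 0 := by
    have heq : MvPolynomial.eval x Q' = MvPolynomial.aeval x Q := by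
      rw [hQ', MvPolynomial.aeval_def, MvPolynomial.eval₂_eq_eval_map]
    rw [heq, hQev]
    exact Ideal.zero_mem _
  obtain ⟨α, hαs, hαm⟩ := aux_ml 4 p (fun i => hp _) (fun i => (hlt i).le) x hx1 hx2 Q' hQ'ne hev
  have hcoeff : MvPolynomial.coeff α Q' =
      algebraMap K (MvPolynomial (Fin 3) K) (MvPolynomial.coeff α Q) :=
    MvPolynomial.coeff_map _ _ _
  have hne0 : MvPolynomial.coeff α Q ≠ 0 := by
    intro h
    apply MvPolynomial.mem_support_iff.mp hαs
    rw [hcoeff, h, map_zero]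
  have hunit : IsUnit (MvPolynomial.coeff α Q') := by
    rw [hcoeff]
    exact (Ne.isUnit hne0).map _
  exact (hp (Fin.last 4)).ne_top (Ideal.eq_top_of_isUnit_mem _ hαm hunit)

set_option maxHeartbeats 4000000 in
/-- The Herzog ideal `𝔭_n` is a prime ideal of height `2` in `k[x1,x2,x3]`, and
the quotient `A/𝔭_n` is a one-dimensional domain. -/
theorem stmt_13 {k : Type*} [Field k] (n : Fin 3 → ℕ) (hpos : ∀ i, 0 < n i) :
    (herzogIdeal k n).IsPrime ∧
    idealHeight (herzogIdeal k n) = 2 ∧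
    IsDomain (MvPolynomial (Fin 3) k ⧸ herzogIdeal k n) ∧
    ringKrullDim (MvPolynomial (Fin 3) k ⧸ herzogIdeal k n) = 1 := by
  classical
  set φ : MvPolynomial (Fin 3) k →+* Polynomial k :=
    (MvPolynomial.aeval (fun i => (Polynomial.X : Polynomial k) ^ n i)).toRingHom with hφ
  have hker : herzogIdeal k n = RingHom.ker φ := rfl
  have hP : (herzogIdeal k n).IsPrime := by rw [hker]; exact RingHom.ker_isPrime φ
  haveI := hP
  haveI hdom : IsDomain (MvPolynomial (Fin 3) k ⧸ herzogIdeal k n) :=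
    Ideal.Quotient.isDomain _
  have hφX : ∀ i, φ (MvPolynomial.X i) = (Polynomial.X : Polynomial k) ^ n i := by
    intro i
    simp [hφ, MvPolynomial.aeval_X]
  -- the lift of φ to the quotient
  letI : Algebra (MvPolynomial (Fin 3) k ⧸ herzogIdeal k n) (Polynomial k) :=
    (RingHom.kerLift φ).toAlgebra
  have halg : (algebraMap (MvPolynomial (Fin 3) k ⧸ herzogIdeal k n) (Polynomial k))
      = RingHom.kerLift φ := rfl
  have hlm : ∀ y, (algebraMap (MvPolynomial (Fin 3) k ⧸ herzogIdeal k n) (Polynomial k))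
      (Ideal.Quotient.mk (herzogIdeal k n) y) = φ y :=
    fun y => RingHom.kerLift_mk φ y
  -- integrality of k[t] over the quotient
  have hXint : IsIntegral (MvPolynomial (Fin 3) k ⧸ herzogIdeal k n)
      (Polynomial.X : Polynomial k) := by
    refine ⟨Polynomial.X ^ n 0 -
      Polynomial.C (Ideal.Quotient.mk (herzogIdeal k n) (MvPolynomial.X 0)),
      Polynomial.monic_X_pow_sub_C _ (hpos 0).ne', ?_⟩
    rw [Polynomial.eval₂_sub, Polynomial.eval₂_X_pow, Polynomial.eval₂_C]
    rw [hlm, hφX]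
    exact sub_self _
  haveI hint : Algebra.IsIntegral (MvPolynomial (Fin 3) k ⧸ herzogIdeal k n) (Polynomial k) := by
    constructor
    intro z
    induction z using Polynomial.induction_on' with
    | add p q hp hq => exact hp.add hq
    | monomial m a =>
      have ha : (Polynomial.C a : Polynomial k)
          = algebraMap (MvPolynomial (Fin 3) k ⧸ herzogIdeal k n) (Polynomial k)
              (Ideal.Quotient.mk (herzogIdeal k n) (MvPolynomial.C a)) := by
        rw [hlm]
        simp [hφ, MvPolynomial.aeval_C, Polynomial.algebraMap_eq]
      have hCa : IsIntegral (MvPolynomial (Fin 3) k ⧸ herzogIdeal k n)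
          (Polynomial.C a : Polynomial k) := by
        rw [ha]; exact isIntegral_algebraMap
      rw [← Polynomial.C_mul_X_pow_eq_monomial]
      exact hCa.mul (hXint.pow m)
  -- the quotient is not a field
  have hnotfield : ¬ IsField (MvPolynomial (Fin 3) k ⧸ herzogIdeal k n) := by
    intro hfield
    have hXne : φ (MvPolynomial.X 0) ≠ 0 := by
      rw [hφX]
      exact pow_ne_zero _ Polynomial.X_ne_zero
    have hb0 : (Ideal.Quotient.mk (herzogIdeal k n) (MvPolynomial.X 0)) ≠ 0 := by
      intro h
      apply hXne
      have := congrArg (algebraMap (MvPolynomial (Fin 3) k ⧸ herzogIdeal k n) (Polynomial k)) h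
      rw [map_zero, hlm] at this
      exact this
    obtain ⟨c, hc⟩ := hfield.mul_inv_cancel hb0
    have h1 := congrArg (algebraMap (MvPolynomial (Fin 3) k ⧸ herzogIdeal k n) (Polynomial k)) hc
    rw [map_one, map_mul, hlm] at h1
    have h3 : IsUnit ((Polynomial.X : Polynomial k) ^ n 0) := by
      rw [← hφX 0]
      exact IsUnit.of_mul_eq_one _ h1
    exact Polynomial.not_isUnit_X
      (isUnit_of_dvd_unit (dvd_pow_self _ (hpos 0).ne') h3)
  -- every nonzero prime of the quotient is maximal
  have hcb : Ideal.comap (algebraMap (MvPolynomial (Fin 3) k ⧸ herzogIdeal k n) (Polynomial k))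
      (⊥ : Ideal (Polynomial k)) = ⊥ := by
    rw [halg]
    exact Ideal.comap_bot_of_injective _ (RingHom.kerLift_injective φ)
  have key : ∀ q : Ideal (MvPolynomial (Fin 3) k ⧸ herzogIdeal k n),
      q.IsPrime → q ≠ ⊥ → q.IsMaximal := by
    intro q hq hq0
    haveI := hq
    obtain ⟨Qb, hQble, hQbprime, hQbcomap⟩ :=
      Ideal.exists_ideal_over_prime_of_isIntegral q ⊥ (le_of_eq_of_le hcb bot_le)
    haveI := hQbprime
    have hQb0 : Qb ≠ ⊥ := by
      intro h
      apply hq0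
      rw [← hQbcomap, h, hcb]
    haveI : Qb.IsMaximal := IsPrime.to_maximal_ideal hQb0
    rw [← hQbcomap]
    exact Ideal.isMaximal_comap_of_isIntegral_of_isMaximal Qb
  -- Krull dimension of the quotient is 1
  have hdimle : ringKrullDim (MvPolynomial (Fin 3) k ⧸ herzogIdeal k n) ≤ 1 := by
    rw [ringKrullDim, Order.krullDim]
    refine iSup_le fun l => ?_
    by_contra hlen
    have h2 : 2 ≤ l.length := by
      have h1 : ((1 : ℕ) : WithBot (WithTop ℕ)) < (l.length : WithBot (WithTop ℕ)) := by
        simpa using not_le.mp hlen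
      have : (1 : ℕ) < l.length := by exact_mod_cast h1
      omega
    have h01 : l.toFun ⟨0, by omega⟩ < l.toFun ⟨1, by omega⟩ :=
      l.strictMono (Fin.mk_lt_mk.mpr (by omega))
    have h12 : l.toFun ⟨1, by omega⟩ < l.toFun ⟨2, by omega⟩ :=
      l.strictMono (Fin.mk_lt_mk.mpr (by omega))
    have hne : (l.toFun ⟨1, by omega⟩).asIdeal ≠ ⊥ := by
      intro h
      have hlt := (PrimeSpectrum.asIdeal_lt_asIdeal _ _).mpr h01
      rw [h] at hlt
      exact not_lt_bot hlt
    have hmax := key _ (l.toFun ⟨1, by omega⟩).isPrime hne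
    have hlt12 := (PrimeSpectrum.asIdeal_lt_asIdeal _ _).mpr h12
    exact absurd (hmax.eq_of_le (l.toFun ⟨2, by omega⟩).isPrime.ne_top hlt12.le) hlt12.ne
  have hdimge : (1 : WithBot (WithTop ℕ)) ≤
      ringKrullDim (MvPolynomial (Fin 3) k ⧸ herzogIdeal k n) := by
    obtain ⟨Mq, hMq⟩ := Ideal.exists_maximal (MvPolynomial (Fin 3) k ⧸ herzogIdeal k n)
    have hMqne : Mq ≠ ⊥ := Ring.ne_bot_of_isMaximal_of_not_isField hMq hnotfield
    let c2s : LTSeries (PrimeSpectrum (MvPolynomial (Fin 3) k ⧸ herzogIdeal k n)) :=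
      ⟨1, ![⟨⊥, Ideal.bot_prime⟩, ⟨Mq, hMq.isPrime⟩], by
        intro i
        fin_cases i
        refine (PrimeSpectrum.asIdeal_lt_asIdeal _ _).mp ?_
        show (⊥ : Ideal (MvPolynomial (Fin 3) k ⧸ herzogIdeal k n)) < Mq
        rw [bot_lt_iff_ne_bot]
        exact hMqne.symm ∘ Eq.symm⟩
    have := Order.LTSeries.length_le_krullDim c2s
    have hc2 : c2s.length = 1 := rfl
    rw [hc2] at this
    exact_mod_cast this
  have hdim : ringKrullDim (MvPolynomial (Fin 3) k ⧸ herzogIdeal k n) = 1 :=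
    le_antisymm hdimle hdimge
  -- 𝔭 is not maximal
  have hnotmax : ¬ (herzogIdeal k n).IsMaximal := fun h =>
    hnotfield ((Ideal.Quotient.maximal_ideal_iff_isField_quotient _).mp h)
  obtain ⟨Mx, hMx, hMxle⟩ := Ideal.exists_le_maximal _ hP.ne_top
  have hltM : herzogIdeal k n < Mx :=
    lt_of_le_of_ne hMxle (fun h => hnotmax (h ▸ hMx))
  -- membership of binomials in 𝔭
  have hmem : ∀ i j : Fin 3,
      (MvPolynomial.X i ^ n j - MvPolynomial.X j ^ n i : MvPolynomial (Fin 3) k)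
        ∈ herzogIdeal k n := by
    intro i j
    rw [hker, RingHom.mem_ker, map_sub, map_pow, map_pow, hφX, hφX,
      ← pow_mul, ← pow_mul, Nat.mul_comm]
    exact sub_self _
  -- a prime element of 𝔭
  have hg12ne : (MvPolynomial.X 1 ^ n 2 - MvPolynomial.X 2 ^ n 1 : MvPolynomial (Fin 3) k) ≠ 0 :=
    aux_binom_ne (by decide) (hpos 2) (hpos 1)
  obtain ⟨q, hqprime, hqdvd, hqmem⟩ : ∃ q : MvPolynomial (Fin 3) k,
      Prime q ∧ q ∣ (MvPolynomial.X 1 ^ n 2 - MvPolynomial.X 2 ^ n 1) ∧ q ∈ herzogIdeal k n := by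
    have hassoc := UniqueFactorizationMonoid.factors_prod hg12ne
    have hin : (UniqueFactorizationMonoid.factors
        (MvPolynomial.X 1 ^ n 2 - MvPolynomial.X 2 ^ n 1 : MvPolynomial (Fin 3) k)).prod
          ∈ herzogIdeal k n := by
      obtain ⟨u, hu⟩ := hassoc
      have : (UniqueFactorizationMonoid.factors
          (MvPolynomial.X 1 ^ n 2 - MvPolynomial.X 2 ^ n 1 : MvPolynomial (Fin 3) k)).prod
            = (MvPolynomial.X 1 ^ n 2 - MvPolynomial.X 2 ^ n 1) * ((u⁻¹ : (MvPolynomial (Fin 3) k)ˣ) : MvPolynomial (Fin 3) k) := by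
        calc (UniqueFactorizationMonoid.factors
            (MvPolynomial.X 1 ^ n 2 - MvPolynomial.X 2 ^ n 1 : MvPolynomial (Fin 3) k)).prod
            = (UniqueFactorizationMonoid.factors
              (MvPolynomial.X 1 ^ n 2 - MvPolynomial.X 2 ^ n 1 : MvPolynomial (Fin 3) k)).prod
                * ↑u * ((u⁻¹ : (MvPolynomial (Fin 3) k)ˣ) : MvPolynomial (Fin 3) k) := by
              rw [Units.mul_inv_cancel_right]
          _ = (MvPolynomial.X 1 ^ n 2 - MvPolynomial.X 2 ^ n 1)
                * ((u⁻¹ : (MvPolynomial (Fin 3) k)ˣ) : MvPolynomial (Fin 3) k) := by rw [hu]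
      rw [this]
      exact Ideal.mul_mem_right _ _ (hmem 1 2)
    obtain ⟨q, hqf, hq𝔭⟩ := (hP.multiset_prod_mem_iff_exists_mem _).mp hin
    exact ⟨q, UniqueFactorizationMonoid.prime_of_factor q hqf,
      (Multiset.dvd_prod hqf).trans hassoc.dvd, hq𝔭⟩
  -- span {q} ≠ 𝔭
  have hspan_ne : Ideal.span {q} ≠ herzogIdeal k n := by
    intro hcontra
    have hq01 : q ∣ (MvPolynomial.X 0 ^ n 1 - MvPolynomial.X 1 ^ n 0 : MvPolynomial (Fin 3) k) := by
      rw [← Ideal.mem_span_singleton, hcontra]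
      exact hmem 0 1
    set E := MvPolynomial.finSuccEquiv k 2 with hE
    have hE1 : E (MvPolynomial.X 1) = Polynomial.C (MvPolynomial.X 0) := by
      rw [show (1 : Fin 3) = Fin.succ 0 from rfl]
      exact MvPolynomial.finSuccEquiv_X_succ
    have hE2 : E (MvPolynomial.X 2) = Polynomial.C (MvPolynomial.X 1) := by
      rw [show (2 : Fin 3) = Fin.succ 1 from rfl]
      exact MvPolynomial.finSuccEquiv_X_succ
    have hE0 : E (MvPolynomial.X 0) = Polynomial.X := MvPolynomial.finSuccEquiv_X_zero
    have hEg12 : E (MvPolynomial.X 1 ^ n 2 - MvPolynomial.X 2 ^ n 1)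
        = Polynomial.C (MvPolynomial.X 0 ^ n 2 - MvPolynomial.X 1 ^ n 1) := by
      rw [map_sub, map_pow, map_pow, hE1, hE2, ← map_pow, ← map_pow, ← map_sub]
    have hEg01 : E (MvPolynomial.X 0 ^ n 1 - MvPolynomial.X 1 ^ n 0)
        = Polynomial.X ^ n 1 - Polynomial.C (MvPolynomial.X 0 ^ n 0) := by
      rw [map_sub, map_pow, map_pow, hE0, hE1, ← map_pow]
    have hc2ne : (MvPolynomial.X 0 ^ n 2 - MvPolynomial.X 1 ^ n 1 : MvPolynomial (Fin 2) k) ≠ 0 :=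
      aux_binom_ne (by decide) (hpos 2) (hpos 1)
    have hqdvd' : E q ∣ Polynomial.C (MvPolynomial.X 0 ^ n 2 - MvPolynomial.X 1 ^ n 1) := by
      rw [← hEg12]
      exact _root_.map_dvd E hqdvd
    have hdeg : (E q).natDegree = 0 := by
      have h1 := Polynomial.natDegree_le_of_dvd hqdvd' (Polynomial.C_ne_zero.mpr hc2ne)
      rw [Polynomial.natDegree_C] at h1
      exact Nat.le_zero.mp h1
    have hCr : E q = Polynomial.C ((E q).coeff 0) := Polynomial.eq_C_of_natDegree_eq_zero hdeg
    obtain ⟨w, hw⟩ : E q ∣ (Polynomial.X ^ n 1 - Polynomial.C (MvPolynomial.X 0 ^ n 0)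
        : Polynomial (MvPolynomial (Fin 2) k)) := by
      rw [← hEg01]
      exact _root_.map_dvd E hq01
    have hcoeffeq := congrArg (fun z => Polynomial.coeff z (n 1)) hw
    rw [hCr] at hcoeffeq
    simp only [Polynomial.coeff_sub, Polynomial.coeff_X_pow, if_pos rfl,
      Polynomial.coeff_C, Polynomial.coeff_C_mul] at hcoeffeq
    rw [if_neg (hpos 1).ne'] at hcoeffeq
    have hr : IsUnit ((E q).coeff 0) :=
      IsUnit.of_mul_eq_one _ (by rw [← hcoeffeq]; simp)
    have hEqunit : IsUnit (E q) := by
      rw [hCr]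
      exact Polynomial.isUnit_C.mpr hr
    have hqunit : IsUnit q := by
      have := hEqunit.map E.symm
      rwa [AlgEquiv.symm_apply_apply] at this
    exact hqprime.not_unit hqunit
  have hspan_lt : Ideal.span {q} < herzogIdeal k n :=
    lt_of_le_of_ne (Ideal.span_le.mpr (Set.singleton_subset_iff.mpr hqmem)) hspan_ne
  have hbot_lt : (⊥ : Ideal (MvPolynomial (Fin 3) k)) < Ideal.span {q} := by
    rw [bot_lt_iff_ne_bot, Ne, Ideal.span_singleton_eq_bot]
    exact hqprime.ne_zero
  -- the height computation
  have hheight : Order.height (⟨herzogIdeal k n, hP⟩ : PrimeSpectrum (MvPolynomial (Fin 3) k))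
      = 2 := by
    apply le_antisymm
    · rw [Order.height_le_iff]
      intro l hl
      by_contra hlen
      have h3 : 3 ≤ l.length := by
        have h1 : ((2 : ℕ) : ℕ∞) < (l.length : ℕ∞) := by
          simpa using not_le.mp hlen
        have : (2 : ℕ) < l.length := by exact_mod_cast h1
        omega
      have hq3le : (l.toFun ⟨3, by omega⟩).asIdeal ≤ herzogIdeal k n := by
        have h1 : l.toFun ⟨3, by omega⟩ ≤ l.last := l.monotone (Fin.le_last _)
        exact le_trans h1 hl
      refine aux_no5 ![(l.toFun ⟨0, by omega⟩).asIdeal, (l.toFun ⟨1, by omega⟩).asIdeal,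
        (l.toFun ⟨2, by omega⟩).asIdeal, (l.toFun ⟨3, by omega⟩).asIdeal, Mx] ?_ ?_
      · intro i
        fin_cases i <;> simp <;>
          first
            | exact (l.toFun _).isPrime
            | exact hMx.isPrime
      · intro i
        fin_cases i <;> simp <;>
          first
            | exact l.strictMono (by simp [Fin.lt_def, -Fin.val_fin_lt])
            | exact lt_of_le_of_lt hq3le hltM
    · let z0 : PrimeSpectrum (MvPolynomial (Fin 3) k) := ⟨⊥, Ideal.bot_prime⟩
      let z1 : PrimeSpectrum (MvPolynomial (Fin 3) k) :=
        ⟨Ideal.span {q}, (Ideal.span_singleton_prime hqprime.ne_zero).mpr hqprime⟩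
      let z2 : PrimeSpectrum (MvPolynomial (Fin 3) k) := ⟨herzogIdeal k n, hP⟩
      have hz01 : z0 < z1 := (PrimeSpectrum.asIdeal_lt_asIdeal _ _).mp hbot_lt
      have hz12 : z1 < z2 := (PrimeSpectrum.asIdeal_lt_asIdeal _ _).mp hspan_lt
      let ser1 : LTSeries (PrimeSpectrum (MvPolynomial (Fin 3) k)) :=
        (RelSeries.singleton _ z0).snoc z1 (by
          rw [RelSeries.last_singleton]
          exact hz01)
      have hser1last : ser1.last = z1 := RelSeries.last_snoc _ _ _
      let ser : LTSeries (PrimeSpectrum (MvPolynomial (Fin 3) k)) :=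
        ser1.snoc z2 (by rw [hser1last]; exact hz12)
      have hserlast : ser.last = z2 := RelSeries.last_snoc _ _ _
      have hle2 := Order.length_le_height (p := ser) (x := z2) (le_of_eq hserlast)
      have hlen2 : ser.length = 2 := by
        simp [ser, ser1, RelSeries.snoc, RelSeries.append_length, RelSeries.singleton_length]
        rfl
      rw [hlen2] at hle2
      exact_mod_cast hle2
  have hih : idealHeight (herzogIdeal k n) = 2 := by
    unfold idealHeight
    apply le_antisymm
    · exact le_trans (iInf_le (fun p : {p : PrimeSpectrum (MvPolynomial (Fin 3) k) //
          herzogIdeal k n ≤ p.asIdeal} => Order.height p.1)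
          ⟨⟨herzogIdeal k n, hP⟩, le_refl _⟩) (le_of_eq hheight)
    · refine le_iInf fun pp => ?_
      have hle : (⟨herzogIdeal k n, hP⟩ : PrimeSpectrum (MvPolynomial (Fin 3) k)) ≤ pp.1 := pp.2
      calc (2 : ℕ∞) = Order.height (⟨herzogIdeal k n, hP⟩
            : PrimeSpectrum (MvPolynomial (Fin 3) k)) := hheight.symm
        _ ≤ Order.height pp.1 := Order.height_mono hle
  exact ⟨hP, hih, hdom, hdim⟩
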